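/- arXiv:math/9802109 — 3 statements merged into one kernel-verified Lean document; each statement's English description precedes it below -/
import Mathlib

section
/- Let G be a compact Hausdorff topological group with normalized Haar probability measure μ, let g₀ ∈ G and let Z₀ be the centralizer of g₀ in G (a closed, hence compact, subgroup) with normalized Haar probability measure ν. Let (T, V) be a strongly continuous unitary representation of G on a complex Hilbert space V. If f₁, f₂ : G → ℂ are continuous functions with equal Z₀-averages, i.e. ∫_{Z₀} f₁(xh) dν(h) = ∫_{Z₀} f₂(xh) dν(h) for every x ∈ G, then the corresponding weighted class operators coincide: T(f₁; g₀) = T(f₂; g₀), i.e. for every v ∈ V, ∫_G f₁(x) • T(x)(T(g₀)(T(x)⁻¹ v)) dμ(x) = ∫_G f₂(x) • T(x)(T(g₀)(T(x)⁻¹ v)) dμ(x). -/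
open MeasureTheory
open scoped ComplexInnerProductSpace

/-- The weighted class operator map factorizes through averaging over the centralizer:
two continuous weights with the same `Z₀`-averages give the same weighted class operator. -/
theorem weighted_class_operator_factors_through_average
    {G : Type*} [Group G] [TopologicalSpace G] [IsTopologicalGroup G]
    [CompactSpace G] [T2Space G] [MeasurableSpace G] [BorelSpace G]
    (μ : Measure G) [μ.IsHaarMeasure] [IsProbabilityMeasure μ]
    (g₀ : G)
    [MeasurableSpace (Subgroup.centralizer ({g₀} : Set G))]
    [BorelSpace (Subgroup.centralizer ({g₀} : Set G))]
    (ν : Measure (Subgroup.centralizer ({g₀} : Set G)))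
    [ν.IsHaarMeasure] [IsProbabilityMeasure ν]
    {V : Type*} [NormedAddCommGroup V] [InnerProductSpace ℂ V] [CompleteSpace V]
    (T : G → V →L[ℂ] V)
    (hT1 : T 1 = 1)
    (hTmul : ∀ g h : G, T (g * h) = (T g).comp (T h))
    (hTunitary : ∀ (g : G) (v w : V), ⟪T g v, T g w⟫ = ⟪v, w⟫)
    (hTcont : ∀ v : V, Continuous fun g : G => T g v)
    (f₁ f₂ : G → ℂ) (hf₁ : Continuous f₁) (hf₂ : Continuous f₂)
    (havg : ∀ x : G,
      (∫ h : Subgroup.centralizer ({g₀} : Set G), f₁ (x * (h : G)) ∂ν) =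
        ∫ h : Subgroup.centralizer ({g₀} : Set G), f₂ (x * (h : G)) ∂ν) :
    ∀ v : V,
      (∫ x, f₁ x • T x (T g₀ (T x⁻¹ v)) ∂μ) =
        ∫ x, f₂ x • T x (T g₀ (T x⁻¹ v)) ∂μ := by
  intro v
  -- the centralizer is closed, hence compact
  have hZclosed : IsClosed ((Subgroup.centralizer ({g₀} : Set G)) : Set G) := by
    have : ((Subgroup.centralizer ({g₀} : Set G)) : Set G) = {h : G | g₀ * h = h * g₀} := by
      ext h
      simp [Subgroup.mem_centralizer_iff]
    rw [this]
    exact isClosed_eq (continuous_const.mul continuous_id) (continuous_id.mul continuous_const)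
  have hZcompact : CompactSpace (Subgroup.centralizer ({g₀} : Set G)) := isCompact_iff_compactSpace.mp hZclosed.isCompact
  haveI : OpensMeasurableSpace (Subgroup.centralizer ({g₀} : Set G)) := BorelSpace.opensMeasurable
  -- Haar measure on a compact group is right-invariant
  have hright : μ.IsMulRightInvariant := by
    constructor
    intro g
    have : IsProbabilityMeasure (μ.map (· * g)) :=
      Measure.isProbabilityMeasure_map (measurable_mul_const g).aemeasurable
    exact Measure.isHaarMeasure_eq_of_isProbabilityMeasure _ _
  -- T is norm-preserving
  have hnorm : ∀ (g : G) (w : V), ‖T g w‖ = ‖w‖ := by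
    intro g w
    rw [@norm_eq_sqrt_re_inner ℂ, @norm_eq_sqrt_re_inner ℂ _ _ _ _ w, hTunitary]
  -- joint continuity of (g, w) ↦ T g w
  have hjoint : Continuous fun p : G × V => T p.1 p.2 := by
    rw [continuous_iff_continuousAt]
    rintro ⟨g₁, w₁⟩
    rw [ContinuousAt, tendsto_iff_norm_sub_tendsto_zero]
    apply squeeze_zero (fun p => norm_nonneg _)
      (g := fun p : G × V => ‖p.2 - w₁‖ + ‖T p.1 w₁ - T g₁ w₁‖)
    · intro p
      calc ‖T p.1 p.2 - T g₁ w₁‖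
          ≤ ‖T p.1 p.2 - T p.1 w₁‖ + ‖T p.1 w₁ - T g₁ w₁‖ :=
            norm_sub_le_norm_sub_add_norm_sub _ _ _
        _ = ‖p.2 - w₁‖ + ‖T p.1 w₁ - T g₁ w₁‖ := by
            rw [← map_sub, hnorm]
    · have h1 : Continuous fun p : G × V => ‖p.2 - w₁‖ :=
        (continuous_snd.sub continuous_const).norm
      have h2 : Continuous fun p : G × V => ‖T p.1 w₁ - T g₁ w₁‖ :=
        (((hTcont w₁).comp continuous_fst).sub continuous_const).norm
      have := (h1.add h2).tendsto (g₁, w₁)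
      convert this using 2 <;> simp [Pi.add_apply]
  set A : G → V := fun x => T x (T g₀ (T x⁻¹ v)) with hA
  have hAcont : Continuous A := by
    have hw : Continuous fun x : G => T g₀ (T x⁻¹ v) :=
      (T g₀).continuous.comp ((hTcont v).comp continuous_inv)
    exact hjoint.comp (continuous_id.prodMk hw)
  -- invariance of A under right translation by centralizer elements
  have hAinv : ∀ (h : (Subgroup.centralizer ({g₀} : Set G))) (x : G), A (x * (h : G)) = A x := by
    intro h x
    have hcomm : g₀ * (h : G) = (h : G) * g₀ :=
      Subgroup.mem_centralizer_iff.mp h.2 g₀ rfl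
    have e1 : (h : G) * g₀ * (h : G)⁻¹ = g₀ := by
      rw [← hcomm, mul_inv_cancel_right]
    have key : ∀ w : V, T (h : G) (T g₀ (T ((h : G))⁻¹ w)) = T g₀ w := by
      intro w
      have e2 : T ((h : G) * g₀ * (h : G)⁻¹) w
          = T (h : G) (T g₀ (T ((h : G))⁻¹ w)) := by
        rw [hTmul ((h : G) * g₀) ((h : G))⁻¹, hTmul (h : G) g₀]
        rfl
      rw [← e2, e1]
    simp only [hA, mul_inv_rev, hTmul x (h : G), hTmul ((h : G))⁻¹ x⁻¹,
      ContinuousLinearMap.comp_apply]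
    rw [key]
  -- the key factorization through the centralizer average
  have key : ∀ f : G → ℂ, Continuous f →
      (∫ x, f x • A x ∂μ) = ∫ x, (∫ h : (Subgroup.centralizer ({g₀} : Set G)), f (x * (h : G)) ∂ν) • A x ∂μ := by
    intro f hf
    have step1 : ∀ h : (Subgroup.centralizer ({g₀} : Set G)), (∫ x, f x • A x ∂μ) = ∫ x, f (x * (h : G)) • A x ∂μ := by
      intro h
      have := integral_mul_right_eq_self (μ := μ) (fun x => f x • A x) (h : G)
      rw [← this]
      congr 1
      ext x
      rw [hAinv h x]
    have hF : Continuous (Function.uncurry fun (h : (Subgroup.centralizer ({g₀} : Set G))) (x : G) => f (x * (h : G)) • A x) := by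
      apply Continuous.smul
      · exact hf.comp (continuous_snd.mul (continuous_subtype_val.comp continuous_fst))
      · exact hAcont.comp continuous_snd
    have hFc : HasCompactSupport
        (Function.uncurry fun (h : (Subgroup.centralizer ({g₀} : Set G))) (x : G) => f (x * (h : G)) • A x) :=
      HasCompactSupport.of_compactSpace _
    calc (∫ x, f x • A x ∂μ)
        = ∫ h : (Subgroup.centralizer ({g₀} : Set G)), (∫ x, f (x * (h : G)) • A x ∂μ) ∂ν := by
          have : (fun h : (Subgroup.centralizer ({g₀} : Set G)) => ∫ x, f (x * (h : G)) • A x ∂μ)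
              = fun _ : (Subgroup.centralizer ({g₀} : Set G)) => ∫ x, f x • A x ∂μ := funext fun h => (step1 h).symm
          rw [this, integral_const]
          simp
      _ = ∫ x, (∫ h : (Subgroup.centralizer ({g₀} : Set G)), f (x * (h : G)) • A x ∂ν) ∂μ :=
          integral_integral_swap_of_hasCompactSupport hF hFc (μ := ν) (ν := μ)
      _ = ∫ x, (∫ h : (Subgroup.centralizer ({g₀} : Set G)), f (x * (h : G)) ∂ν) • A x ∂μ := by
          congr 1
          ext x
          exact integral_smul_const (μ := ν) (fun h : (Subgroup.centralizer ({g₀} : Set G)) => f (x * (h : G))) (A x)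
  show (∫ x, f₁ x • A x ∂μ) = ∫ x, f₂ x • A x ∂μ
  rw [key f₁ hf₁, key f₂ hf₂]
  simp only [havg]
end

section
/- Let G be a compact Hausdorff topological group with normalized Haar probability measure μ, let π be a continuous irreducible unitary representation of G on a finite-dimensional complex inner product space V of dimension n with orthonormal basis (e₁, …, e_n), character χ(g) = trace(π(g)), and matrix coefficients t_{ij}(g) = ⟪π(g) e_j, e_i⟫. Then for every g₀ ∈ G, every pair of indices i, j and every y ∈ G, the class operator of the left regular representation acts on the conjugate matrix coefficient as the scalar χ(g₀)/n: ∫_G conj(t_{ij}(x g₀⁻¹ x⁻¹ y)) dμ(x) = (χ(g₀)/n) · conj(t_{ij}(y)). -/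
open MeasureTheory
open scoped ComplexInnerProductSpace

/-- The class operator of the left regular representation acts on conjugate matrix
coefficients of an irreducible representation `π` as multiplication by `χ(g₀)/n`. -/
theorem class_operator_on_conj_matrix_coefficients
    {G : Type*} [Group G] [TopologicalSpace G] [IsTopologicalGroup G]
    [CompactSpace G] [T2Space G] [MeasurableSpace G] [BorelSpace G]
    (μ : Measure G) [μ.IsHaarMeasure] [IsProbabilityMeasure μ]
    {V : Type*} [NormedAddCommGroup V] [InnerProductSpace ℂ V]
    [FiniteDimensional ℂ V] [Nontrivial V]
    (π : G → V →L[ℂ] V)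
    (hπ1 : π 1 = 1)
    (hπmul : ∀ g h : G, π (g * h) = (π g).comp (π h))
    (hπunitary : ∀ (g : G) (v w : V), ⟪π g v, π g w⟫ = ⟪v, w⟫)
    (hπcont : ∀ v : V, Continuous fun g : G => π g v)
    (hirr : ∀ W : Submodule ℂ V, (∀ g : G, ∀ v ∈ W, π g v ∈ W) → W = ⊥ ∨ W = ⊤)
    {n : ℕ} (b : OrthonormalBasis (Fin n) ℂ V)
    (t : Fin n → Fin n → G → ℂ)
    (ht : ∀ (i j : Fin n) (g : G), t i j g = ⟪b i, π g (b j)⟫)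
    (χ : G → ℂ) (hχ : ∀ g : G, χ g = LinearMap.trace ℂ V (π g : V →ₗ[ℂ] V))
    (g₀ y : G) (i j : Fin n) :
    (∫ x, (starRingEnd ℂ) (t i j (x * g₀⁻¹ * x⁻¹ * y)) ∂μ) =
      (χ g₀ / (n : ℂ)) * (starRingEnd ℂ) (t i j y) := by
  classical
  -- basic consequences of the hypotheses
  have hπinvl : ∀ (g : G) (v : V), π g⁻¹ (π g v) = v := by
    intro g v
    have h := congrArg (fun T : V →L[ℂ] V => T v) ((hπmul g⁻¹ g).symm.trans (by rw [inv_mul_cancel, hπ1]))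
    exact (by simpa using h.symm : v = _).symm

  have hπinvr : ∀ (g : G) (v : V), π g (π g⁻¹ v) = v := by
    intro g v
    have h := congrArg (fun T : V →L[ℂ] V => T v) ((hπmul g g⁻¹).symm.trans (by rw [mul_inv_cancel, hπ1]))
    exact (by simpa using h.symm : v = _).symm

  have hadj : ∀ (g : G) (v w : V), ⟪π g v, w⟫ = ⟪v, π g⁻¹ w⟫ := by
    intro g v w
    have h := hπunitary g⁻¹ (π g v) w
    rw [hπinvl] at h
    exact h.symm
  have hadj2 : ∀ (g : G) (v w : V), ⟪v, π g w⟫ = ⟪π g⁻¹ v, w⟫ := by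
    intro g v w
    have := congrArg (starRingEnd ℂ) (hadj g w v)
    simpa only [inner_conj_symm] using this
  -- continuity of `π` as an operator-valued map
  have hπexp : ∀ g : G, π g =
      ∑ k : Fin n, ∑ l : Fin n, (⟪b k, π g (b l)⟫ : ℂ) • ((innerSL ℂ (b l)).smulRight (b k)) := by
    intro g
    ext v
    simp only [ContinuousLinearMap.sum_apply, ContinuousLinearMap.smul_apply,
      ContinuousLinearMap.smulRight_apply, innerSL_apply_apply]
    conv_lhs => rw [← b.sum_repr v]
    rw [map_sum]
    rw [Finset.sum_comm]
    refine Finset.sum_congr rfl fun l _ => ?_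
    rw [b.repr_apply_apply, _root_.map_smul]
    conv_lhs => rw [← b.sum_repr (π g (b l))]
    rw [Finset.smul_sum]
    refine Finset.sum_congr rfl fun k _ => ?_
    rw [b.repr_apply_apply]
    rw [smul_smul, smul_smul, mul_comm]
  have hcontOp : Continuous fun g : G => π g := by
    have : (fun g : G => π g) = fun g =>
        ∑ k : Fin n, ∑ l : Fin n, (⟪b k, π g (b l)⟫ : ℂ) • ((innerSL ℂ (b l)).smulRight (b k)) :=
      funext hπexp
    rw [this]
    refine continuous_finset_sum _ fun k _ => continuous_finset_sum _ fun l _ => ?_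
    exact (Continuous.inner (𝕜 := ℂ) (f := fun _ : G => b k) continuous_const (hπcont (b l))).smul continuous_const
  -- the averaged operator S
  set F : G → V →L[ℂ] V := fun x => π (x * g₀ * x⁻¹) with hF
  have hFcont : Continuous F :=
    hcontOp.comp (((continuous_id.mul continuous_const).mul continuous_inv))
  have hFint : Integrable F μ :=
    hFcont.integrable_of_hasCompactSupport (isClosed_tsupport _).isCompact
  set S : V →L[ℂ] V := ∫ x, F x ∂μ with hS
  have hSapply : ∀ v : V, S v = ∫ x, F x v ∂μ := fun v =>
    ContinuousLinearMap.integral_apply hFint v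
  have hFvint : ∀ v : V, Integrable (fun x => F x v) μ := fun v =>
    ((hπcont v).comp (((continuous_id.mul continuous_const).mul continuous_inv))).integrable_of_hasCompactSupport
      (isClosed_tsupport _).isCompact
  -- S commutes with every π g
  have hcomm : ∀ (g : G) (v : V), π g (S v) = S (π g v) := by
    intro g v
    rw [hSapply, hSapply]
    rw [← ContinuousLinearMap.integral_comp_comm (π g) (hFvint v)]
    have key : ∀ x : G, π g (F x v) = F (g * x) (π g v) := by
      intro x
      have h1 : g * (x * g₀ * x⁻¹) = (g * x) * g₀ * (g * x)⁻¹ * g := by group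
      have h2 := congrArg (fun T : V →L[ℂ] V => T v) (hπmul g (x * g₀ * x⁻¹))
      have h3 := congrArg (fun T : V →L[ℂ] V => T v)
        (hπmul ((g * x) * g₀ * (g * x)⁻¹) g)
      simp only [ContinuousLinearMap.comp_apply] at h2 h3
      rw [← h2, h1, h3]
    simp only [key]
    exact integral_mul_left_eq_self (fun x => F x (π g v)) g
  -- Schur: S is a scalar
  obtain ⟨c, hc⟩ := Module.End.exists_eigenvalue (S : V →ₗ[ℂ] V)
  have hscal : ∀ v : V, S v = c • v := by
    have hinv : ∀ g : G, ∀ v ∈ Module.End.eigenspace (S : V →ₗ[ℂ] V) c,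
        π g v ∈ Module.End.eigenspace (S : V →ₗ[ℂ] V) c := by
      intro g v hv
      rw [Module.End.mem_eigenspace_iff] at hv ⊢
      show S (π g v) = c • π g v
      rw [← hcomm]
      have h4 : S v = c • v := hv
      rw [h4, _root_.map_smul]
    rcases hirr _ hinv with h | h
    · exact absurd h (Module.End.hasEigenvalue_iff.mp hc)
    · intro v
      have hv : v ∈ Module.End.eigenspace (S : V →ₗ[ℂ] V) c := h ▸ Submodule.mem_top
      exact Module.End.mem_eigenspace_iff.mp hv
  -- trace computation: trace S = χ g₀ and trace S = c * n
  have hn : Module.finrank ℂ V = n := by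
    rw [Module.finrank_eq_card_basis b.toBasis, Fintype.card_fin]
  have hn0 : (n : ℂ) ≠ 0 := by
    have h0 : 0 < n := hn ▸ Module.finrank_pos
    exact_mod_cast h0.ne'
  have htrS : LinearMap.trace ℂ V (S : V →ₗ[ℂ] V) = χ g₀ := by
    set Tr : (V →L[ℂ] V) →L[ℂ] ℂ :=
      LinearMap.toContinuousLinearMap ((LinearMap.trace ℂ V).comp (ContinuousLinearMap.coeLM ℂ)) with hTr
    have hTrapp : ∀ T : V →L[ℂ] V, Tr T = LinearMap.trace ℂ V (T : V →ₗ[ℂ] V) := fun T => rfl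
    have h1 : Tr S = ∫ x, Tr (F x) ∂μ := (Tr.integral_comp_comm hFint).symm
    have h2 : ∀ x : G, Tr (F x) = χ g₀ := by
      intro x
      rw [hTrapp, hχ]
      have e2 : x⁻¹ * (x * g₀) = g₀ := by group
      show LinearMap.trace ℂ V ((π (x * g₀ * x⁻¹) : V →L[ℂ] V) : V →ₗ[ℂ] V) = _
      rw [hπmul (x * g₀) x⁻¹, ContinuousLinearMap.toLinearMap_comp]
      have : ((π (x * g₀) : V →ₗ[ℂ] V).comp (π x⁻¹ : V →ₗ[ℂ] V))
          = (π (x * g₀) : V →ₗ[ℂ] V) * (π x⁻¹ : V →ₗ[ℂ] V) := rfl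
      rw [this, LinearMap.trace_mul_comm]
      have : (π x⁻¹ : V →ₗ[ℂ] V) * (π (x * g₀) : V →ₗ[ℂ] V)
          = ((π x⁻¹).comp (π (x * g₀)) : V →ₗ[ℂ] V) := rfl
      rw [this, ← hπmul, e2]
    rw [← hTrapp, h1]
    simp only [h2]
    simp
  have hceq : c = χ g₀ / n := by
    have h1 : LinearMap.trace ℂ V (S : V →ₗ[ℂ] V) = c * n := by
      have : (S : V →ₗ[ℂ] V) = c • LinearMap.id := by
        ext v; exact hscal v
      rw [this, _root_.map_smul, LinearMap.trace_id, hn]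
      simp [mul_comm]
    field_simp
    rw [← htrS, h1, mul_comm]
  -- final computation
  have hintegrand : ∀ x : G,
      (starRingEnd ℂ) (t i j (x * g₀⁻¹ * x⁻¹ * y)) = ⟪π y (b j), F x (b i)⟫ := by
    intro x
    rw [ht, inner_conj_symm]
    have h1 : (x * g₀⁻¹ * x⁻¹ * y)⁻¹ = y⁻¹ * (x * g₀ * x⁻¹) := by group
    rw [hadj, h1]
    have h2 := congrArg (fun T : V →L[ℂ] V => T (b i)) (hπmul y⁻¹ (x * g₀ * x⁻¹))
    simp only [ContinuousLinearMap.comp_apply] at h2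
    rw [h2, hadj2, inv_inv]
  calc (∫ x, (starRingEnd ℂ) (t i j (x * g₀⁻¹ * x⁻¹ * y)) ∂μ)
      = ∫ x, ⟪π y (b j), F x (b i)⟫ ∂μ := by simp_rw [hintegrand]
    _ = ⟪π y (b j), S (b i)⟫ := by
        rw [hSapply]
        exact (ContinuousLinearMap.integral_comp_comm (innerSL ℂ (π y (b j))) (hFvint (b i))).symm ▸ rfl
    _ = (χ g₀ / n) * (starRingEnd ℂ) (t i j y) := by
        rw [hscal, inner_smul_right, hceq, ht, inner_conj_symm]
end

section
/- Let G be a compact Hausdorff topological group with normalized Haar probability measure μ, let π be a continuous irreducible unitary representation of G on a finite-dimensional complex inner product space of dimension n with orthonormal basis (e₁, …, e_n) and matrix coefficients t_{sj}(g) = ⟪π(g) e_j, e_s⟫. Fix g₀ ∈ G, a continuous function f : G → ℂ, and an index j. Then the weighted class operator of the left regular representation, ψ ↦ (y ↦ ∫_G f(x) ψ(x g₀⁻¹ x⁻¹ y) dμ(x)), maps the subspace span_ℂ{ y ↦ conj(t_{sj}(y)) : 1 ≤ s ≤ n } of functions on G into itself; that is, for each i there exist complex numbers c₁, …, c_n with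 ∫_G f(x) conj(t_{ij}(x g₀⁻¹ x⁻¹ y)) dμ(x) = Σ_{s=1}^{n} c_s · conj(t_{sj}(y)) for all y ∈ G. -/
open MeasureTheory
open scoped ComplexInnerProductSpace

/-- The weighted class operator of the left regular representation maps the span of the
`j`-th column of conjugate matrix coefficients of an irreducible representation `π`
into itself. -/
theorem weighted_class_operator_preserves_conj_coefficient_column
    {G : Type*} [Group G] [TopologicalSpace G] [IsTopologicalGroup G]
    [CompactSpace G] [T2Space G] [MeasurableSpace G] [BorelSpace G]
    (μ : Measure G) [μ.IsHaarMeasure] [IsProbabilityMeasure μ]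
    {V : Type*} [NormedAddCommGroup V] [InnerProductSpace ℂ V]
    [FiniteDimensional ℂ V] [Nontrivial V]
    (π : G → V →L[ℂ] V)
    (hπ1 : π 1 = 1)
    (hπmul : ∀ g h : G, π (g * h) = (π g).comp (π h))
    (hπunitary : ∀ (g : G) (v w : V), ⟪π g v, π g w⟫ = ⟪v, w⟫)
    (hπcont : ∀ v : V, Continuous fun g : G => π g v)
    (hirr : ∀ W : Submodule ℂ V, (∀ g : G, ∀ v ∈ W, π g v ∈ W) → W = ⊥ ∨ W = ⊤)
    {n : ℕ} (b : OrthonormalBasis (Fin n) ℂ V)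
    (t : Fin n → Fin n → G → ℂ)
    (ht : ∀ (i j : Fin n) (g : G), t i j g = ⟪b i, π g (b j)⟫)
    (g₀ : G) (f : G → ℂ) (hf : Continuous f) (j : Fin n) :
    ∀ i : Fin n, ∃ c : Fin n → ℂ, ∀ y : G,
      (∫ x, f x * (starRingEnd ℂ) (t i j (x * g₀⁻¹ * x⁻¹ * y)) ∂μ) =
        ∑ s : Fin n, c s * (starRingEnd ℂ) (t s j y) := by
  intro i
  -- matrix coefficients are continuous
  have htcont : ∀ p q : Fin n, Continuous (t p q) := by
    intro p q
    have : Continuous fun g : G => (⟪b p, π g (b q)⟫ : ℂ) :=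
      Continuous.inner continuous_const (hπcont (b q))
    simpa [funext fun g => ht p q g] using this
  -- multiplicativity of matrix coefficients
  have hmul : ∀ g h : G, t i j (g * h) = ∑ s : Fin n, t i s g * t s j h := by
    intro g h
    rw [ht, hπmul]
    have hrepr := b.sum_repr' (π h (b j))
    calc (⟪b i, ((π g).comp (π h)) (b j)⟫ : ℂ)
        = ⟪b i, π g (∑ s : Fin n, (⟪b s, π h (b j)⟫ : ℂ) • b s)⟫ := by
          rw [hrepr]; rfl
      _ = ∑ s : Fin n, (⟪b s, π h (b j)⟫ : ℂ) * ⟪b i, π g (b s)⟫ := by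
          rw [map_sum, inner_sum]
          refine Finset.sum_congr rfl fun s _ => ?_
          rw [(π g).map_smul, inner_smul_right]
      _ = ∑ s : Fin n, t i s g * t s j h := by
          exact Finset.sum_congr rfl fun s _ => by rw [ht, ht]; ring
  refine ⟨fun s => ∫ x, f x * (starRingEnd ℂ) (t i s (x * g₀⁻¹ * x⁻¹)) ∂μ, fun y => ?_⟩
  have hint : ∀ s : Fin n,
      Integrable (fun x : G => f x * (starRingEnd ℂ) (t i s (x * g₀⁻¹ * x⁻¹))) μ := by
    intro s
    have hcomp : Continuous fun x : G => t i s (x * g₀⁻¹ * x⁻¹) := by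
      apply (htcont i s).comp
      continuity
    exact (hf.mul hcomp.star).integrable_of_hasCompactSupport (isClosed_tsupport _).isCompact
  calc (∫ x, f x * (starRingEnd ℂ) (t i j (x * g₀⁻¹ * x⁻¹ * y)) ∂μ)
      = ∫ x, ∑ s : Fin n,
          (fun x : G => f x * (starRingEnd ℂ) (t i s (x * g₀⁻¹ * x⁻¹))) x
            * (starRingEnd ℂ) (t s j y) ∂μ := by
        refine integral_congr_ae (Filter.Eventually.of_forall fun x => ?_)
        simp only [hmul (x * g₀⁻¹ * x⁻¹) y, map_sum, Finset.mul_sum, map_mul]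
        exact Finset.sum_congr rfl fun s _ => by ring
    _ = ∑ s : Fin n, (∫ x, f x * (starRingEnd ℂ) (t i s (x * g₀⁻¹ * x⁻¹)) ∂μ)
          * (starRingEnd ℂ) (t s j y) := by
        rw [integral_finset_sum _ fun s _ => (hint s).mul_const _]
        exact Finset.sum_congr rfl fun s _ => integral_mul_const _ _
end
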